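/- For every permutation π of Fin n, the cost of the corresponding perfect matching satisfies ∑_{i} |s(π(i)) − r(i)| ≥ ∑_{j=1}^{2n−1} diff(j) · (p(j+1) − p(j)). -/

import Mathlib

open Finset

private lemma tel (p : ℕ → ℝ) (a b : ℕ) (hab : a ≤ b) :
    ∑ j ∈ Finset.Ico (a+1) (b+1), (p j - p (j-1)) = p b - p a := by
  rw [Finset.sum_Ico_eq_sum_range]
  have h1 : b + 1 - (a + 1) = b - a := by omega
  rw [h1]
  have h2 : ∀ i ∈ Finset.range (b - a),
      p (a + 1 + i) - p (a + 1 + i - 1) = p (a + (i+1)) - p (a + i) := by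
    intro i _
    congr 2 <;> omega
  rw [Finset.sum_congr rfl h2, Finset.sum_range_sub (fun i => p (a + i))]
  congr 2
  omega

/-- `lineDiff lab j` is the absolute difference between the number of
server-labeled entries and request-labeled entries among the first `j`
entries (indices `0, …, j-1`). -/
def lineDiff (lab : ℕ → Bool) (j : ℕ) : ℤ :=
  |(((Finset.range j).filter (fun k => lab k = true)).card : ℤ) -
    (((Finset.range j).filter (fun k => lab k = false)).card : ℤ)|

/-- For every permutation `π`, the cost of the corresponding perfect
matching is at least `∑_{j=1}^{2n-1} diff(j) · (p(j+1) − p(j))`, where `p` is a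
nondecreasing enumeration of all `2n` points with a labeling `lab` consistent with
the multiset of server and request points.  (In this 0-indexed formulation the
`j`-th interval, for `1 ≤ j ≤ 2n-1`, is `[p (j-1), p j]`, and `diff j` counts
labels among the first `j` entries `p 0, …, p (j-1)`.) -/
theorem matching_cost_lower_bound (n : ℕ) (hn : 1 ≤ n) (s r : Fin n → ℝ)
    (p : ℕ → ℝ) (lab : ℕ → Bool)
    (hmono : ∀ j k : ℕ, j ≤ k → k < 2 * n → p j ≤ p k)
    (e : Fin n ⊕ Fin n ≃ Fin (2 * n))
    (hes : ∀ i : Fin n, p (e (Sum.inl i) : ℕ) = s i ∧ lab (e (Sum.inl i) : ℕ) = true)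
    (her : ∀ i : Fin n, p (e (Sum.inr i) : ℕ) = r i ∧ lab (e (Sum.inr i) : ℕ) = false)
    (π : Equiv.Perm (Fin n)) :
    ∑ j ∈ Finset.Ico 1 (2 * n), (lineDiff lab j : ℝ) * (p j - p (j - 1)) ≤
      ∑ i, |s (π i) - r i| := by
  set a : Fin n → ℕ := fun i => (e (Sum.inl (π i)) : ℕ) with ha
  set b : Fin n → ℕ := fun i => (e (Sum.inr i) : ℕ) with hb
  have halt : ∀ i, a i < 2 * n := fun i => (e (Sum.inl (π i))).2
  have hblt : ∀ i, b i < 2 * n := fun i => (e (Sum.inr i)).2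
  -- rewrite each edge cost as a telescoping sum
  have hedge : ∀ i : Fin n, |s (π i) - r i| =
      ∑ j ∈ Finset.Ico 1 (2*n),
        (if min (a i) (b i) < j ∧ j ≤ max (a i) (b i) then (p j - p (j-1)) else 0) := by
    intro i
    have hpa : p (a i) = s (π i) := (hes (π i)).1
    have hpb : p (b i) = r i := (her i).1
    have hflt : Finset.filter (fun j => min (a i) (b i) < j ∧ j ≤ max (a i) (b i))
        (Finset.Ico 1 (2*n)) = Finset.Ico (min (a i) (b i) + 1) (max (a i) (b i) + 1) := by
      ext j
      simp only [Finset.mem_filter, Finset.mem_Ico]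
      have := halt i; have := hblt i
      omega
    rw [Finset.sum_ite, Finset.sum_const_zero, add_zero, hflt,
      tel p _ _ (by omega : min (a i) (b i) ≤ max (a i) (b i))]
    rw [← hpa, ← hpb]
    rcases le_total (a i) (b i) with h | h
    · rw [min_eq_left h, max_eq_right h, abs_sub_comm,
        abs_of_nonneg (by linarith [hmono (a i) (b i) h (hblt i)])]
    · rw [min_eq_right h, max_eq_left h,
        abs_of_nonneg (by linarith [hmono (b i) (a i) h (halt i)])]
  rw [Finset.sum_congr rfl (fun i _ => hedge i), Finset.sum_comm]
  -- now compare termwise over j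
  apply Finset.sum_le_sum
  intro j hj
  simp only [Finset.mem_Ico] at hj
  -- count
  have hS : ((Finset.range j).filter (fun k => lab k = true)) =
      (Finset.univ.filter (fun i : Fin n => a i < j)).image a := by
    ext k
    simp only [Finset.mem_image, Finset.mem_filter, Finset.mem_range, Finset.mem_univ,
      true_and]
    constructor
    · rintro ⟨hk, hlab⟩
      have hk2 : k < 2 * n := by omega
      rcases h : e.symm ⟨k, hk2⟩ with i | i
      · have hval : a (π⁻¹ i) = k := by
          simp only [ha, Equiv.Perm.inv_def, Equiv.apply_symm_apply]
          rw [show e (Sum.inl i) = ⟨k, hk2⟩ by rw [← h, Equiv.apply_symm_apply]]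
        exact ⟨π⁻¹ i, by omega, hval⟩
      · exfalso
        have h5 := (her i).2
        rw [show e (Sum.inr i) = ⟨k, hk2⟩ by rw [← h, Equiv.apply_symm_apply]] at h5
        have : lab k = false := h5
        rw [hlab] at this
        exact Bool.noConfusion this
    · rintro ⟨i, hi, rfl⟩
      exact ⟨hi, (hes (π i)).2⟩
  have hR : ((Finset.range j).filter (fun k => lab k = false)) =
      (Finset.univ.filter (fun i : Fin n => b i < j)).image b := by
    ext k
    simp only [Finset.mem_image, Finset.mem_filter, Finset.mem_range, Finset.mem_univ,
      true_and]
    constructor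
    · rintro ⟨hk, hlab⟩
      have hk2 : k < 2 * n := by omega
      rcases h : e.symm ⟨k, hk2⟩ with i | i
      · exfalso
        have h5 := (hes i).2
        rw [show e (Sum.inl i) = ⟨k, hk2⟩ by rw [← h, Equiv.apply_symm_apply]] at h5
        have : lab k = true := h5
        rw [hlab] at this
        exact Bool.noConfusion this
      · have hval : b i = k := by
          simp only [hb]
          rw [show e (Sum.inr i) = ⟨k, hk2⟩ by rw [← h, Equiv.apply_symm_apply]]
        exact ⟨i, by omega, hval⟩
    · rintro ⟨i, hi, rfl⟩
      exact ⟨hi, (her i).2⟩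
  have hainj : Function.Injective a := by
    intro x y hxy
    have := e.injective (Fin.val_injective hxy)
    exact π.injective (Sum.inl_injective this)
  have hbinj : Function.Injective b := by
    intro x y hxy
    exact Sum.inr_injective (e.injective (Fin.val_injective hxy))
  set A : Finset (Fin n) := Finset.univ.filter (fun i => a i < j) with hA
  set B : Finset (Fin n) := Finset.univ.filter (fun i => b i < j) with hB
  have hScard : ((Finset.range j).filter (fun k => lab k = true)).card = A.card := by
    rw [hS, Finset.card_image_of_injective _ hainj]
  have hRcard : ((Finset.range j).filter (fun k => lab k = false)).card = B.card := by
    rw [hR, Finset.card_image_of_injective _ hbinj]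
  -- the RHS inner sum
  have hinner : ∑ i : Fin n,
      (if min (a i) (b i) < j ∧ j ≤ max (a i) (b i) then (p j - p (j-1)) else 0) =
      ((Finset.univ.filter
        (fun i : Fin n => min (a i) (b i) < j ∧ j ≤ max (a i) (b i))).card : ℝ) *
        (p j - p (j-1)) := by
    rw [Finset.sum_ite, Finset.sum_const_zero, add_zero, Finset.sum_const, nsmul_eq_mul]
  rw [hinner]
  have hpos : (0:ℝ) ≤ p j - p (j-1) := by
    have := hmono (j-1) j (by omega) hj.2
    linarith
  apply mul_le_mul_of_nonneg_right _ hpos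
  -- card inequality
  set C : Finset (Fin n) :=
    Finset.univ.filter (fun i : Fin n => min (a i) (b i) < j ∧ j ≤ max (a i) (b i)) with hC
  have hAB : A \ B ⊆ C := by
    intro i hi
    simp only [hA, hB, hC, Finset.mem_sdiff, Finset.mem_filter, Finset.mem_univ,
      true_and] at *
    omega
  have hBA : B \ A ⊆ C := by
    intro i hi
    simp only [hA, hB, hC, Finset.mem_sdiff, Finset.mem_filter, Finset.mem_univ,
      true_and] at *
    omega
  have h1 : (A.card : ℤ) - B.card ≤ C.card := by
    have := Finset.card_le_card hAB
    have h2 : A.card ≤ (A \ B).card + B.card := Finset.card_le_card_sdiff_add_card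
    push_cast
    omega
  have h2 : (B.card : ℤ) - A.card ≤ C.card := by
    have := Finset.card_le_card hBA
    have h3 : B.card ≤ (B \ A).card + A.card := Finset.card_le_card_sdiff_add_card
    push_cast
    omega
  have : lineDiff lab j ≤ (C.card : ℤ) := by
    unfold lineDiff
    rw [hScard, hRcard]
    rw [abs_le]
    constructor <;> omega
  exact_mod_cast this
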